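/- Let G be a group acting by homeomorphisms on compact Hausdorff spaces X and Y, and let ψ : X → Y be a G-equivariant continuous surjection. If the action of G on the space of unordered triples of distinct points of X is properly discontinuous (i.e. the action on X is 3-discontinuous), then the action of G on Y is also 3-discontinuous. -/

import Mathlib

open Filter Topology

/-- The set of ordered triples of pairwise distinct points of `T`
(a model for the space `Θ³T` of distinct triples). -/
def distinctTriples (T : Type) : Set (T × T × T) :=
  {x | x.1 ≠ x.2.1 ∧ x.1 ≠ x.2.2 ∧ x.2.1 ≠ x.2.2}

/-- Diagonal action of a group element on triples. -/
def tripleSmul {G T : Type} [Group G] [MulAction G T] (g : G) (x : T × T × T) :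
    T × T × T :=
  (g • x.1, g • x.2.1, g • x.2.2)

/-- The action of `G` on `T` is 3-discontinuous (convergence property): the
induced action on the space of distinct triples is properly discontinuous. -/
def ThreeDiscontinuous (G T : Type) [Group G] [MulAction G T]
    [TopologicalSpace T] : Prop :=
  ∀ K L : Set (T × T × T), K ⊆ distinctTriples T → L ⊆ distinctTriples T →
    IsCompact K → IsCompact L →
    {g : G | (tripleSmul g '' K ∩ L).Nonempty}.Finite

/-- The action of `G` on `T` is 3-cocompact: `Θ³T / G` is compact, i.e. there is
a compact fundamental set for the action on distinct triples. -/
def ThreeCocompact (G T : Type) [Group G] [MulAction G T]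
    [TopologicalSpace T] : Prop :=
  ∃ K : Set (T × T × T), K ⊆ distinctTriples T ∧ IsCompact K ∧
    ∀ x ∈ distinctTriples T, ∃ g : G, tripleSmul g x ∈ K

/-- The action of `G` on `T` is 2-cocompact: there is a compact fundamental set
for the action on pairs of distinct points. -/
def TwoCocompact (G T : Type) [Group G] [MulAction G T]
    [TopologicalSpace T] : Prop :=
  ∃ K : Set (T × T), K ⊆ {x | x.1 ≠ x.2} ∧ IsCompact K ∧
    ∀ x : T × T, x.1 ≠ x.2 → ∃ g : G, (g • x.1, g • x.2) ∈ K

/-- `x` is a conical (limit) point for the action of `G` on `T`: there are an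
injective sequence `gₙ` in `G` and distinct points `a ≠ b` with `gₙ • y → a`
for every `y ≠ x` and `gₙ • x → b`. -/
def IsConical (G : Type) {T : Type} [Group G] [MulAction G T]
    [TopologicalSpace T] (x : T) : Prop :=
  ∃ (g : ℕ → G) (a b : T), Function.Injective g ∧ a ≠ b ∧
    (∀ y : T, y ≠ x → Tendsto (fun n => g n • y) atTop (nhds a)) ∧
    Tendsto (fun n => g n • x) atTop (nhds b)

/-- `x` is a limit point of the subgroup `H` acting on `T`: some orbit
accumulates at `x` along an injective sequence in `H`. -/
def IsLimitPointOf {G T : Type} [Group G] [MulAction G T] [TopologicalSpace T]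
    (H : Subgroup G) (x : T) : Prop :=
  ∃ u : ℕ → H, Function.Injective u ∧
    ∃ t : T, Tendsto (fun n => (u n : G) • t) atTop (nhds x)

/-- `p` is a parabolic point: the limit set of its stabilizer is exactly `{p}`. -/
def IsParabolicPt (G : Type) {T : Type} [Group G] [MulAction G T]
    [TopologicalSpace T] (p : T) : Prop :=
  {x : T | IsLimitPointOf (MulAction.stabilizer G p) x} = {p}

/-- if `G` acts 3-discontinuously on a compactum `X` and
`ψ : X → Y` is a `G`-equivariant continuous surjection onto a compactum `Y`
(both with more than two points), then the action of `G` on `Y` is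
3-discontinuous. -/
theorem stmt12 {G X Y : Type} [Group G]
    [TopologicalSpace X] [CompactSpace X] [T2Space X] [MulAction G X]
    [TopologicalSpace Y] [CompactSpace Y] [T2Space Y] [MulAction G Y]
    (hXcont : ∀ g : G, Continuous (fun x : X => g • x))
    (hYcont : ∀ g : G, Continuous (fun y : Y => g • y))
    (hX3 : ∃ x : X × X × X, x ∈ distinctTriples X)
    (hY3 : ∃ y : Y × Y × Y, y ∈ distinctTriples Y)
    (ψ : X → Y) (hψc : Continuous ψ) (hψs : Function.Surjective ψ)
    (hψe : ∀ (g : G) (x : X), ψ (g • x) = g • ψ x)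
    (h3 : ThreeDiscontinuous G X) :
    ThreeDiscontinuous G Y := by
  intro K L hKd hLd hKc hLc
  set ψ3 : X × X × X → Y × Y × Y := fun x => (ψ x.1, ψ x.2.1, ψ x.2.2) with hψ3
  have hψ3c : Continuous ψ3 := by
    exact (hψc.comp continuous_fst).prodMk
      ((hψc.comp (continuous_fst.comp continuous_snd)).prodMk
        (hψc.comp (continuous_snd.comp continuous_snd)))
  have hsub : ∀ S : Set (Y × Y × Y), S ⊆ distinctTriples Y →
      ψ3 ⁻¹' S ⊆ distinctTriples X := by
    intro S hS x hx
    have h := hS hx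
    exact ⟨fun h1 => h.1 (by simp [ψ3, h1]), fun h1 => h.2.1 (by simp [ψ3, h1]),
      fun h1 => h.2.2 (by simp [ψ3, h1])⟩
  have hcomp : ∀ S : Set (Y × Y × Y), IsCompact S → IsCompact (ψ3 ⁻¹' S) :=
    fun S hS => (hS.isClosed.preimage hψ3c).isCompact
  have hfin := h3 (ψ3 ⁻¹' K) (ψ3 ⁻¹' L) (hsub K hKd) (hsub L hLd)
    (hcomp K hKc) (hcomp L hLc)
  refine hfin.subset ?_
  intro g hg
  obtain ⟨y, ⟨k, hkK, hky⟩, hyL⟩ := hg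
  obtain ⟨x1, hx1⟩ := hψs k.1
  obtain ⟨x2, hx2⟩ := hψs k.2.1
  obtain ⟨x3, hx3⟩ := hψs k.2.2
  refine ⟨tripleSmul g (x1, x2, x3), ⟨(x1, x2, x3), ?_, rfl⟩, ?_⟩
  · simp only [Set.mem_preimage, ψ3, hx1, hx2, hx3]
    exact hkK
  · simp only [Set.mem_preimage, ψ3, tripleSmul, hψe, hx1, hx2, hx3]
    rw [show ((g • k.1, g • k.2.1, g • k.2.2) : Y × Y × Y) = tripleSmul g k from rfl, hky]
    exact hyL
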